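/- For any positive integers d_1,...,d_k, the product of formal power series Li_{-d_1}(z)···Li_{-d_k}(z) can be written as Σ_{j=1}^{k-1+Σd_i} c_j Li_{-j}(z) for unique rational numbers c_j, and c_j = 0 unless j ≡ k - 1 + Σd_i (mod 2). -/

import Mathlib

open Polynomial Finset

private lemma poly_zero_of_nat_roots (P : ℚ[X]) (h : ∀ n : ℕ, P.eval (n : ℚ) = 0) :
    P = 0 := by
  apply P.eq_zero_of_infinite_isRoot
  apply Set.Infinite.mono (s := Set.range ((↑) : ℕ → ℚ))
  · rintro x ⟨n, rfl⟩; exact h n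
  · exact Set.infinite_range_of_injective Nat.cast_injective

private lemma exists_faulhaber (m : ℕ) :
    ∃ S : ℚ[X], S.natDegree ≤ m + 1 ∧
      (∀ n : ℕ, S.eval (n : ℚ) = ∑ a ∈ Finset.range n, (a : ℚ) ^ m) ∧
      (∀ x : ℚ, S.eval (x + 1) = S.eval x + x ^ m) := by
  refine ⟨∑ i ∈ Finset.range (m + 1),
      C (_root_.bernoulli i * ((m + 1).choose i : ℚ) / (m + 1)) * X ^ (m + 1 - i),
      ?_, ?_, ?_⟩
  · apply Polynomial.natDegree_sum_le_of_forall_le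
    intro i _
    refine (Polynomial.natDegree_C_mul_le _ _).trans ?_
    simp [Nat.sub_le]
  · intro n
    rw [sum_range_pow n m]
    simp [Polynomial.eval_finset_sum]
    exact Finset.sum_congr rfl fun i _ => by ring
  · -- recurrence, first at naturals then extend
    set S : ℚ[X] := ∑ i ∈ Finset.range (m + 1),
      C (_root_.bernoulli i * ((m + 1).choose i : ℚ) / (m + 1)) * X ^ (m + 1 - i) with hS
    have heval : ∀ n : ℕ, S.eval (n : ℚ) = ∑ a ∈ Finset.range n, (a : ℚ) ^ m := by
      intro n
      rw [hS, sum_range_pow n m]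
      simp [Polynomial.eval_finset_sum]
      exact Finset.sum_congr rfl fun i _ => by ring
    have hT : S.comp (X + 1) - S - X ^ m = 0 := by
      apply poly_zero_of_nat_roots
      intro n
      have h1 : ((n : ℚ) + 1) = ((n + 1 : ℕ) : ℚ) := by push_cast; ring
      simp only [Polynomial.eval_sub, Polynomial.eval_comp, Polynomial.eval_add,
        Polynomial.eval_X, Polynomial.eval_one, Polynomial.eval_pow, h1, heval,
        Finset.sum_range_succ]
      ring
    intro x
    have := congrArg (Polynomial.eval x) hT
    simp only [Polynomial.eval_sub, Polynomial.eval_comp, Polynomial.eval_add,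
      Polynomial.eval_X, Polynomial.eval_one, Polynomial.eval_pow, Polynomial.eval_zero] at this
    linarith

private lemma exists_conv (p q : ℕ) (hp : 1 ≤ p) (hq : 1 ≤ q) :
    ∃ R : ℚ[X], R.natDegree ≤ p + q + 1 ∧
      (∀ n : ℕ, R.eval (n : ℚ) =
        ∑ a ∈ Finset.range (n + 1), (a : ℚ) ^ p * ((n : ℚ) - a) ^ q) ∧
      (∀ n : ℕ, R.eval (-(n : ℚ)) =
        (-1) ^ (p + q + 1) * ∑ a ∈ Finset.range (n + 1), (a : ℚ) ^ p * ((n : ℚ) - a) ^ q) := by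
  choose S hSdeg hSpos hSrec using fun j : ℕ => exists_faulhaber (p + (q - j))
  -- negative values of S
  have hSneg : ∀ j : ℕ, ∀ n : ℕ, (S j).eval (-(n : ℚ)) =
      (-1) ^ (p + (q - j) + 1) * ∑ a ∈ Finset.range (n + 1), (a : ℚ) ^ (p + (q - j)) := by
    intro j n
    induction n with
    | zero =>
        have h0 : (S j).eval 0 = 0 := by
          have := hSpos j 0; simpa using this
        have he : p + (q - j) ≠ 0 := by omega
        simp [h0, zero_pow he]
    | succ n ih =>
        have hrec := hSrec j (-(n + 1 : ℚ))
        have h1 : (-(n + 1 : ℚ) + 1) = -(n : ℚ) := by ring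
        rw [h1] at hrec
        have h2 : (-((n + 1 : ℕ) : ℚ)) = -(n + 1 : ℚ) := by push_cast; ring
        have h5 : (S j).eval (-(n + 1 : ℚ)) =
            (S j).eval (-(n : ℚ)) - (-(n + 1 : ℚ)) ^ (p + (q - j)) := by linarith
        rw [h2, h5, ih]
        conv_rhs => rw [Finset.sum_range_succ]
        have h3 : ((n + 1 : ℕ) : ℚ) = (n : ℚ) + 1 := by push_cast; ring
        rw [h3]
        have h4 : (-((n : ℚ) + 1)) ^ (p + (q - j)) =
            (-1) ^ (p + (q - j)) * ((n : ℚ) + 1) ^ (p + (q - j)) := by rw [neg_pow]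
        rw [h4, pow_succ]
        ring
  have hswap : ∀ (n N : ℕ),
      ∑ j ∈ Finset.range (q + 1), (q.choose j : ℚ) * (-1) ^ (q - j) * (n : ℚ) ^ j *
        ∑ a ∈ Finset.range N, (a : ℚ) ^ (p + (q - j)) =
      ∑ a ∈ Finset.range N, (a : ℚ) ^ p * ((n : ℚ) - a) ^ q := by
    intro n N
    simp only [Finset.mul_sum]
    rw [Finset.sum_comm]
    refine Finset.sum_congr rfl fun a _ => ?_
    have hbin : ((n : ℚ) - a) ^ q = ((n : ℚ) + (-(a:ℚ))) ^ q := by ring_nf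
    rw [hbin, add_pow, Finset.mul_sum]
    refine Finset.sum_congr rfl fun j hj => ?_
    have hneg : (-(a : ℚ)) ^ (q - j) = (-1) ^ (q - j) * (a : ℚ) ^ (q - j) := by rw [neg_pow]
    rw [hneg, pow_add]
    ring
  refine ⟨∑ j ∈ Finset.range (q + 1),
      C ((q.choose j : ℚ) * (-1) ^ (q - j)) * X ^ j * S j, ?_, ?_, ?_⟩
  · apply Polynomial.natDegree_sum_le_of_forall_le
    intro j hj
    have hj' : j ≤ q := Nat.lt_succ_iff.mp (Finset.mem_range.mp hj)
    calc (C ((q.choose j : ℚ) * (-1) ^ (q - j)) * X ^ j * S j).natDegree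
        ≤ (C ((q.choose j : ℚ) * (-1) ^ (q - j)) * X ^ j).natDegree + (S j).natDegree :=
          Polynomial.natDegree_mul_le
      _ ≤ j + (p + (q - j) + 1) := by
          gcongr
          · exact (Polynomial.natDegree_C_mul_le _ _).trans (by simp)
          · exact hSdeg j
      _ ≤ p + q + 1 := by omega
  · intro n
    simp only [Polynomial.eval_finset_sum, Polynomial.eval_mul, Polynomial.eval_C,
      Polynomial.eval_pow, Polynomial.eval_X, hSpos]
    rw [hswap n n]
    rw [Finset.sum_range_succ]
    have : ((n : ℚ) - n) ^ q = 0 := by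
      rw [sub_self, zero_pow (by omega)]
    rw [this]
    ring
  · intro n
    simp only [Polynomial.eval_finset_sum, Polynomial.eval_mul, Polynomial.eval_C,
      Polynomial.eval_pow, Polynomial.eval_X, hSneg]
    rw [← hswap n (n + 1), Finset.mul_sum]
    refine Finset.sum_congr rfl fun j hj => ?_
    have hj' : j ≤ q := Nat.lt_succ_iff.mp (Finset.mem_range.mp hj)
    have hnp : (-(n : ℚ)) ^ j = (-1) ^ j * (n : ℚ) ^ j := by rw [neg_pow]
    rw [hnp]
    have hsign : ((-1 : ℚ)) ^ (q - j) * (-1) ^ j * (-1) ^ (p + (q - j) + 1) =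
        (-1) ^ (p + q + 1) * (-1) ^ (q - j) := by
      rw [← pow_add, ← pow_add, ← pow_add]
      congr 1
      omega
    linear_combination ((q.choose j : ℚ)) * (n : ℚ) ^ j * (∑ a ∈ Finset.range (n + 1), (a : ℚ) ^ (p + (q - j))) * hsign


private lemma coeff_parity_of_eval_neg (R : ℚ[X]) (ε : ℚ)
    (h : ∀ n : ℕ, R.eval (-(n : ℚ)) = ε * R.eval (n : ℚ)) :
    ∀ j, (-1 : ℚ) ^ j * R.coeff j = ε * R.coeff j := by
  set Q : ℚ[X] := ∑ j ∈ Finset.range (R.natDegree + 1), C ((-1) ^ j * R.coeff j) * X ^ j with hQ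
  have hQeval : ∀ x : ℚ, Q.eval x = R.eval (-x) := by
    intro x
    rw [hQ]
    simp only [Polynomial.eval_finset_sum, Polynomial.eval_mul, Polynomial.eval_C,
      Polynomial.eval_pow, Polynomial.eval_X]
    rw [Polynomial.eval_eq_sum_range (-x)]
    refine Finset.sum_congr rfl fun j _ => ?_
    rw [neg_pow]
    ring
  have hQR : Q = ε • R := by
    have h0 : Q - ε • R = 0 := by
      apply poly_zero_of_nat_roots
      intro n
      simp [hQeval, h n]
    linear_combination (norm := ring_nf) h0
  have hQcoeff : ∀ j, Q.coeff j = if j ∈ Finset.range (R.natDegree + 1) then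
      (-1) ^ j * R.coeff j else 0 := by
    intro j
    rw [hQ, Polynomial.finset_sum_coeff]
    simp only [Polynomial.coeff_C_mul, Polynomial.coeff_X_pow]
    rw [Finset.sum_congr rfl (fun x _ => by rw [mul_ite, mul_one, mul_zero, eq_comm]),
      Finset.sum_ite_eq (Finset.range (R.natDegree + 1)) j fun i => (-1) ^ i * R.coeff i]
  intro j
  have := congrArg (fun P : ℚ[X] => P.coeff j) hQR
  simp only [Polynomial.coeff_smul, smul_eq_mul] at this
  rw [hQcoeff j] at this
  by_cases hj : j ∈ Finset.range (R.natDegree + 1)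
  · rw [if_pos hj] at this; exact this
  · rw [if_neg hj] at this
    have : R.coeff j = 0 :=
      Polynomial.coeff_eq_zero_of_natDegree_lt (by simpa using Nat.lt_of_succ_le (not_lt.mp (by simpa [Finset.mem_range] using hj)))
    simp [this]

private lemma main_poly : ∀ (k : ℕ) (d : Fin (k + 1) → ℕ), (∀ i, 1 ≤ d i) →
    ∃ P : ℚ[X], P.natDegree ≤ k + ∑ i, d i ∧ P.coeff 0 = 0 ∧
      (∀ n : ℕ, (PowerSeries.coeff n) (∏ i, PowerSeries.mk fun n => (n : ℚ) ^ d i)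
        = P.eval (n : ℚ)) ∧
      (∀ n : ℕ, P.eval (-(n : ℚ)) = (-1) ^ (k + ∑ i, d i) * P.eval (n : ℚ)) := by
  intro k
  induction k with
  | zero =>
      intro d hd
      refine ⟨X ^ d 0, ?_, ?_, ?_, ?_⟩
      · simp [Fin.sum_univ_one]
      · have : ¬ (0 = d 0) := by have := hd 0; omega
        simp [Polynomial.coeff_X_pow, this]
      · intro n; simp [Fin.prod_univ_one]
      · intro n
        have hs : (0 : ℕ) + ∑ i : Fin (0 + 1), d i = d 0 := by simp [Fin.sum_univ_succ]
        rw [hs]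
        simp only [Polynomial.eval_pow, Polynomial.eval_X]
        rw [neg_pow]
  | succ k ih =>
      intro d hd
      obtain ⟨P, hdeg, h0, heval, hneg⟩ := ih (fun i => d i.castSucc) (fun i => hd _)
      set q := d (Fin.last (k + 1)) with hqdef
      have hq1 : 1 ≤ q := hd _
      have hDnew : k + 1 + ∑ i : Fin (k + 2), d i
          = (k + ∑ i : Fin (k + 1), d i.castSucc) + q + 1 := by
        rw [Fin.sum_univ_castSucc]; omega
      rw [hDnew]
      set D0 := k + ∑ i : Fin (k + 1), d i.castSucc with hD0
      choose R hRdeg hReval hRneg using fun m : ℕ => exists_conv (m + 1) q (by omega) hq1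
      set Pnew := ∑ m ∈ Finset.range P.natDegree, C (P.coeff (m + 1)) * R m with hPnewdef
      have hA : ∀ a : ℚ, P.eval a
          = ∑ m ∈ Finset.range P.natDegree, P.coeff (m + 1) * a ^ (m + 1) := by
        intro a
        rw [Polynomial.eval_eq_sum_range, Finset.sum_range_succ']
        simp [h0]
      have hprod : ∀ n : ℕ,
          (PowerSeries.coeff n) (∏ i : Fin (k + 2), PowerSeries.mk fun n => (n : ℚ) ^ d i)
          = ∑ a ∈ Finset.range (n + 1), P.eval (a : ℚ) * ((n : ℚ) - a) ^ q := by
        intro n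
        rw [Fin.prod_univ_castSucc, PowerSeries.coeff_mul,
          Finset.Nat.sum_antidiagonal_eq_sum_range_succ_mk]
        refine Finset.sum_congr rfl fun a ha => ?_
        have ha' : a ≤ n := Nat.lt_succ_iff.mp (Finset.mem_range.mp ha)
        rw [heval a]
        simp only [PowerSeries.coeff_mk]
        congr 1
        rw [Nat.cast_sub ha']
      have hPeval : ∀ n : ℕ, Pnew.eval (n : ℚ)
          = ∑ a ∈ Finset.range (n + 1), P.eval (a : ℚ) * ((n : ℚ) - a) ^ q := by
        intro n
        rw [hPnewdef]
        simp only [Polynomial.eval_finset_sum, Polynomial.eval_mul, Polynomial.eval_C, hReval,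
          Finset.mul_sum]
        rw [Finset.sum_comm]
        refine Finset.sum_congr rfl fun a _ => ?_
        rw [hA, Finset.sum_mul]
        refine Finset.sum_congr rfl fun m _ => by ring
      have hPneg : ∀ n : ℕ, Pnew.eval (-(n : ℚ)) = (-1) ^ (D0 + q + 1) * Pnew.eval (n : ℚ) := by
        intro n
        rw [hPnewdef]
        simp only [Polynomial.eval_finset_sum, Polynomial.eval_mul, Polynomial.eval_C, hRneg,
          hReval]
        rw [Finset.mul_sum]
        refine Finset.sum_congr rfl fun m _ => ?_
        rcases eq_or_ne (P.coeff (m + 1)) 0 with hc | hc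
        · simp [hc]
        · have hpar := coeff_parity_of_eval_neg P ((-1) ^ D0) hneg (m + 1)
          have hsign : ((-1 : ℚ)) ^ (m + 1) = (-1) ^ D0 := mul_right_cancel₀ hc hpar
          have hsign2 : ((-1 : ℚ)) ^ (m + 1 + q + 1) = (-1) ^ (D0 + q + 1) := by
            have e1 : m + 1 + q + 1 = (m + 1) + (q + 1) := by omega
            have e2 : D0 + q + 1 = D0 + (q + 1) := by omega
            rw [e1, e2, pow_add, hsign, ← pow_add]
          rw [hsign2]; ring
      have hPdeg : Pnew.natDegree ≤ D0 + q + 1 := by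
        apply Polynomial.natDegree_sum_le_of_forall_le
        intro m hm
        have hm' : m < P.natDegree := Finset.mem_range.mp hm
        calc (C (P.coeff (m + 1)) * R m).natDegree
            ≤ (R m).natDegree := Polynomial.natDegree_C_mul_le _ _
          _ ≤ m + 1 + q + 1 := hRdeg m
          _ ≤ D0 + q + 1 := by omega
      have hP0 : Pnew.coeff 0 = 0 := by
        rw [Polynomial.coeff_zero_eq_eval_zero]
        have h := hPeval 0
        simp only [Nat.cast_zero, zero_add, Finset.sum_range_one, Nat.cast_zero, sub_zero,
          zero_sub] at h
        rw [h]
        have : ((0 : ℚ) - 0) ^ q = 0 := by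
          rw [sub_self, zero_pow (by omega : q ≠ 0)]
        simp_all
      exact ⟨Pnew, hPdeg, hP0, fun n => (hprod n).trans (hPeval n).symm, hPneg⟩

/-- For positive integers `d₁,...,d_k`, the product `Li_{-d₁}(z) ⋯ Li_{-d_k}(z)`
(of formal power series `Li_{-d}(z) = ∑_{n≥0} n^d z^n`) is a unique rational linear combination
`∑_{j=1}^{k-1+∑dᵢ} c_j Li_{-j}(z)`, and `c_j = 0` unless `j ≡ k - 1 + ∑dᵢ (mod 2)`. -/
theorem polylog_product_decomposition (k : ℕ) (hk : 1 ≤ k) (d : Fin k → ℕ)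
    (hd : ∀ i, 1 ≤ d i) :
    ∃ c : ℕ → ℚ,
      ((∀ j, j ∉ Finset.Icc 1 (k - 1 + ∑ i, d i) → c j = 0) ∧
        (∏ i : Fin k, PowerSeries.mk fun n => (n : ℚ) ^ d i) =
          ∑ j ∈ Finset.Icc 1 (k - 1 + ∑ i, d i),
            c j • PowerSeries.mk fun n => (n : ℚ) ^ j) ∧
      (∀ j, c j ≠ 0 → j % 2 = (k - 1 + ∑ i, d i) % 2) ∧
      ∀ c' : ℕ → ℚ,
        (∀ j, j ∉ Finset.Icc 1 (k - 1 + ∑ i, d i) → c' j = 0) →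
        ((∏ i : Fin k, PowerSeries.mk fun n => (n : ℚ) ^ d i) =
            ∑ j ∈ Finset.Icc 1 (k - 1 + ∑ i, d i),
              c' j • PowerSeries.mk fun n => (n : ℚ) ^ j) →
        c' = c := by
  obtain ⟨k, rfl⟩ : ∃ k', k = k' + 1 := ⟨k - 1, by omega⟩
  simp only [Nat.add_sub_cancel]
  obtain ⟨P, hdeg, h0, heval, hneg⟩ := main_poly k d hd
  have hsupp : ∀ j, j ∉ Finset.Icc 1 (k + ∑ i, d i) → P.coeff j = 0 := by
    intro j hj
    rw [Finset.mem_Icc] at hj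
    push_neg at hj
    rcases Nat.lt_or_ge j 1 with h1 | h1
    · interval_cases j; exact h0
    · exact Polynomial.coeff_eq_zero_of_natDegree_lt (lt_of_le_of_lt hdeg (hj h1))
  have hsum : (∏ i : Fin (k + 1), PowerSeries.mk fun n => (n : ℚ) ^ d i) =
      ∑ j ∈ Finset.Icc 1 (k + ∑ i, d i), P.coeff j • PowerSeries.mk fun n : ℕ => (n : ℚ) ^ j := by
    ext n
    rw [heval n, map_sum]
    simp only [map_smul, PowerSeries.coeff_mk, smul_eq_mul]
    rw [Polynomial.eval_eq_sum_range]
    have e1 : ∑ i ∈ Finset.range (P.natDegree + 1), P.coeff i * (n : ℚ) ^ i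
        = ∑ i ∈ Finset.range (k + ∑ i, d i + 1), P.coeff i * (n : ℚ) ^ i := by
      apply Finset.sum_subset
      · exact Finset.range_subset_range.mpr (by omega)
      · intro i _ hi
        have : P.natDegree < i := by
          rw [Finset.mem_range] at hi; omega
        rw [Polynomial.coeff_eq_zero_of_natDegree_lt this, zero_mul]
    have e2 : ∑ j ∈ Finset.Icc 1 (k + ∑ i, d i), P.coeff j * (n : ℚ) ^ j
        = ∑ i ∈ Finset.range (k + ∑ i, d i + 1), P.coeff i * (n : ℚ) ^ i := by
      apply Finset.sum_subset
      · intro i hi; rw [Finset.mem_Icc] at hi; rw [Finset.mem_range]; omega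
      · intro i hi hni
        rw [Finset.mem_range] at hi
        rw [Finset.mem_Icc] at hni
        push_neg at hni
        have : i = 0 := by omega
        subst this
        simp [h0]
    rw [e1, ← e2]
  refine ⟨fun j => P.coeff j, ⟨hsupp, hsum⟩, ?_, ?_⟩
  · intro j hc
    have hpar := coeff_parity_of_eval_neg P ((-1) ^ (k + ∑ i, d i)) hneg j
    have hsign : ((-1 : ℚ)) ^ j = (-1) ^ (k + ∑ i, d i) := mul_right_cancel₀ hc hpar
    rcases Nat.even_or_odd j with hj | hj <;>
      rcases Nat.even_or_odd (k + ∑ i, d i) with hD | hD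
    · rw [Nat.even_iff.mp hj, Nat.even_iff.mp hD]
    · exfalso; rw [Even.neg_one_pow hj, Odd.neg_one_pow hD] at hsign; norm_num at hsign
    · exfalso; rw [Odd.neg_one_pow hj, Even.neg_one_pow hD] at hsign; norm_num at hsign
    · rw [Nat.odd_iff.mp hj, Nat.odd_iff.mp hD]
  · intro c' hc'supp hc'eq
    funext j
    by_cases hj : j ∈ Finset.Icc 1 (k + ∑ i, d i)
    · have hcoeffs : ∀ n : ℕ, ∑ i ∈ Finset.Icc 1 (k + ∑ i, d i), c' i * (n : ℚ) ^ i
          = ∑ i ∈ Finset.Icc 1 (k + ∑ i, d i), P.coeff i * (n : ℚ) ^ i := by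
        intro n
        have h1 := congrArg (PowerSeries.coeff n) hc'eq
        have h2 := congrArg (PowerSeries.coeff n) hsum
        rw [map_sum] at h1 h2
        simp only [map_smul, PowerSeries.coeff_mk, smul_eq_mul] at h1 h2
        rw [← h1, ← h2]
      have hQ : (∑ i ∈ Finset.Icc 1 (k + ∑ i, d i), C (c' i - P.coeff i) * X ^ i) = 0 := by
        apply poly_zero_of_nat_roots
        intro n
        simp only [Polynomial.eval_finset_sum, Polynomial.eval_mul, Polynomial.eval_C,
          Polynomial.eval_pow, Polynomial.eval_X, sub_mul]
        rw [Finset.sum_sub_distrib, hcoeffs n, sub_self]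
      have hcj := congrArg (fun p : ℚ[X] => p.coeff j) hQ
      simp only [Polynomial.finset_sum_coeff, Polynomial.coeff_C_mul, Polynomial.coeff_X_pow,
        Polynomial.coeff_zero] at hcj
      rw [Finset.sum_congr rfl (fun x _ => by rw [mul_ite, mul_one, mul_zero, eq_comm]),
        Finset.sum_ite_eq (Finset.Icc 1 (k + ∑ i, d i)) j (fun i => c' i - P.coeff i)] at hcj
      rw [if_pos hj] at hcj
      have : c' j - P.coeff j = 0 := hcj
      linarith
    · rw [hc'supp j hj, hsupp j hj]
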